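/- Let k be a field and p an odd prime. Suppose M = B·D·A is an identity of d×d matrices over k[[u]], where: M is upper triangular with i-th diagonal entry c_i·u^{t_i} for some unit c_i ∈ k[[u]]^× and some nonnegative integer t_i; B is invertible over k[[u]]; D = diag(u^{r_1}, ..., u^{r_d}) with 0 ≤ r_1 ≤ r_2 ≤ ... ≤ r_d ≤ p; and A has all its entries in the subring k[[u^p]] and is invertible over k[[u]]. Then the multiset {t_1, ..., t_d} equals the multiset {r_1, ..., r_d}. -/

import Mathlib

open PowerSeries Matrix Finset

section Stmt2Aux
variable {k : Type*} [Field k] {d : ℕ}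
lemma stmt2_dvd_mulVec {R : Type*} [CommRing R] {x : R} (N : Matrix (Fin d) (Fin d) R)
    {w : Fin d → R} (h : ∀ i, x ∣ w i) (j : Fin d) : x ∣ (N *ᵥ w) j := by
  simp only [Matrix.mulVec, dotProduct]
  exact Finset.dvd_sum fun i _ => (h i).mul_left _
def stmt2V (M : Matrix (Fin d) (Fin d) (PowerSeries k)) (m : ℕ) : Submodule k (Fin d → k) where
  carrier := {v | ∀ i, (X : PowerSeries k) ^ m ∣ (M *ᵥ fun l => PowerSeries.C (v l)) i}
  zero_mem' := by
    intro i
    have h : (fun l => PowerSeries.C ((0 : Fin d → k) l)) = (0 : Fin d → PowerSeries k) := by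
      funext l; simp
    rw [h, Matrix.mulVec_zero]; exact dvd_zero _
  add_mem' := by
    intro a b ha hb i
    have h : (fun l => PowerSeries.C ((a + b) l))
        = (fun l => PowerSeries.C (a l)) + fun l => PowerSeries.C (b l) := by
      funext l; simp
    rw [h, Matrix.mulVec_add]; exact dvd_add (ha i) (hb i)
  smul_mem' := by
    intro s a ha i
    have h : (fun l => PowerSeries.C ((s • a) l))
        = (PowerSeries.C s) • fun l => PowerSeries.C (a l) := by
      funext l; simp [Pi.smul_apply, smul_eq_mul]
    rw [h, Matrix.mulVec_smul]; exact (ha i).mul_left _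
lemma mem_stmt2V {M : Matrix (Fin d) (Fin d) (PowerSeries k)} {m : ℕ} {v : Fin d → k} :
    v ∈ stmt2V M m ↔ ∀ i, (X : PowerSeries k) ^ m ∣ (M *ᵥ fun l => PowerSeries.C (v l)) i :=
  Iff.rfl
lemma stmt2_aux_lt {U W : PowerSeries k} {a b : ℕ} (hU : constantCoeff (R := k) U ≠ 0)
    (h : U * X ^ a = W * X ^ b) (hab : a < b) : False := by
  apply hU
  have h1 : (PowerSeries.coeff (0 + a)) (U * X ^ a) = PowerSeries.coeff 0 U :=
    PowerSeries.coeff_mul_X_pow U a 0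
  rw [zero_add, h, PowerSeries.X_pow_dvd_iff.mp (dvd_mul_left _ _) a hab] at h1
  rw [← PowerSeries.coeff_zero_eq_constantCoeff_apply]
  exact h1.symm

lemma stmt2_X_pow_cancel {U W : PowerSeries k} {a b : ℕ} (hU : constantCoeff (R := k) U ≠ 0)
    (hW : constantCoeff (R := k) W ≠ 0) (h : U * X ^ a = W * X ^ b) : a = b := by
  by_contra hne
  rcases lt_or_gt_of_ne hne with hlt | hgt
  · exact stmt2_aux_lt hU h hlt
  · exact stmt2_aux_lt hW h.symm hgt

lemma stmt2_count_sum {p : ℕ} (f : Fin d → ℕ) :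
    ∑ m ∈ Finset.Icc 1 p, (Finset.univ.filter (fun j => m ≤ f j)).card
      = ∑ j, min p (f j) := by
  simp_rw [Finset.card_filter]
  rw [Finset.sum_comm]
  refine Finset.sum_congr rfl fun j _ => ?_
  rw [← Finset.card_filter]
  have h : (Finset.Icc 1 p).filter (fun m => m ≤ f j) = Finset.Icc 1 (min p (f j)) := by
    ext x
    simp only [Finset.mem_filter, Finset.mem_Icc, le_min_iff]
    omega
  rw [h, Nat.card_Icc]
  omega

end Stmt2Aux



/-- the multiset lemma of Section 2 of the paper.
If `M = B · diag(u^{r₁}, …, u^{r_d}) · A` over `k[[u]]`, with `M` upper triangular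
with diagonal entries `c i * u ^ (t i)` for units `c i`, `B` invertible,
`0 ≤ r₁ ≤ ⋯ ≤ r_d ≤ p`, and `A` invertible with all entries in `k[[u^p]]`, then
`{t₁, …, t_d} = {r₁, …, r_d}` as multisets. -/
theorem stmt2 {k : Type*} [Field k] {p d : ℕ} (hp : p.Prime) (hodd : Odd p)
    (t : Fin d → ℕ) (c : Fin d → PowerSeries k) (hc : ∀ i, IsUnit (c i))
    (r : Fin d → ℕ) (hr_mono : Monotone r) (hr_le : ∀ i, r i ≤ p)
    (M B A : Matrix (Fin d) (Fin d) (PowerSeries k))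
    (hM_lower : ∀ i j : Fin d, j < i → M i j = 0)
    (hM_diag : ∀ i : Fin d, M i i = c i * PowerSeries.X ^ (t i))
    (hB : IsUnit B.det)
    (hAcoeff : ∀ i j : Fin d, ∀ n : ℕ, PowerSeries.coeff n (A i j) ≠ 0 → p ∣ n)
    (hA : IsUnit A.det)
    (hfact : M = B * Matrix.diagonal (fun i => (PowerSeries.X : PowerSeries k) ^ (r i)) * A) :
    Multiset.map t Finset.univ.val = Multiset.map r Finset.univ.val := by
  classical
  set Dm : Matrix (Fin d) (Fin d) (PowerSeries k) :=
    Matrix.diagonal (fun i => (X : PowerSeries k) ^ (r i)) with hDm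
  set A₀ : Matrix (Fin d) (Fin d) k := A.map (constantCoeff (R := k)) with hA₀
  have hApart : ∀ i j, (X : PowerSeries k) ^ p ∣ (A i j - PowerSeries.C (A₀ i j)) := by
    intro i j
    rw [PowerSeries.X_pow_dvd_iff]
    intro n hn
    rw [map_sub]
    rcases Nat.eq_zero_or_pos n with h0 | hpos
    · subst h0
      simp [hA₀, Matrix.map_apply, PowerSeries.coeff_zero_eq_constantCoeff]
    · rw [PowerSeries.coeff_C, if_neg hpos.ne', sub_zero]
      by_contra hne
      have := hAcoeff i j n hne
      have := Nat.le_of_dvd hpos this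
      omega
  have hBinv : Invertible B := B.invertibleOfIsUnitDet hB
  have hA₀det : IsUnit A₀.det := by
    have h1 : A₀ = (constantCoeff (R := k)).mapMatrix A := rfl
    rw [h1, ← RingHom.map_det]
    exact hA.map _
  have hA₀inv : Invertible A₀ := A₀.invertibleOfIsUnitDet hA₀det
  have hsplit : ∀ (v : Fin d → k) (j : Fin d), ∃ s : PowerSeries k,
      (A *ᵥ fun l => PowerSeries.C (v l)) j
        = PowerSeries.C ((A₀ *ᵥ v) j) + X ^ p * s := by
    intro v j
    have hdvd : (X : PowerSeries k) ^ p ∣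
        (A *ᵥ fun l => PowerSeries.C (v l)) j - PowerSeries.C ((A₀ *ᵥ v) j) := by
      have h1 : (A *ᵥ fun l => PowerSeries.C (v l)) j - PowerSeries.C ((A₀ *ᵥ v) j)
          = ∑ l, (A j l - PowerSeries.C (A₀ j l)) * PowerSeries.C (v l) := by
        simp only [Matrix.mulVec, dotProduct, map_sum, _root_.map_mul, sub_mul,
          Finset.sum_sub_distrib]
      rw [h1]
      exact Finset.dvd_sum fun l _ => ((hApart j l).mul_right _)
    obtain ⟨s, hs⟩ := hdvd
    exact ⟨s, by linear_combination hs⟩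
  have hchar : ∀ (m : ℕ), m ≤ p → ∀ v : Fin d → k,
      (v ∈ stmt2V M m ↔ ∀ j, r j < m → (A₀ *ᵥ v) j = 0) := by
    intro m hm v
    have hMv : (M *ᵥ fun l => PowerSeries.C (v l))
        = B *ᵥ (Dm *ᵥ (A *ᵥ fun l => PowerSeries.C (v l))) := by
      rw [hfact, Matrix.mulVec_mulVec, Matrix.mulVec_mulVec]
    rw [mem_stmt2V]
    constructor
    · intro hv j hj
      have h1 : ∀ i, (X : PowerSeries k) ^ m ∣
          (Dm *ᵥ (A *ᵥ fun l => PowerSeries.C (v l))) i := by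
        intro i
        have h2 : (Dm *ᵥ (A *ᵥ fun l => PowerSeries.C (v l)))
            = (⅟B) *ᵥ (M *ᵥ fun l => PowerSeries.C (v l)) := by
          calc Dm *ᵥ (A *ᵥ fun l => PowerSeries.C (v l))
              = (⅟B * B) *ᵥ (Dm *ᵥ (A *ᵥ fun l => PowerSeries.C (v l))) := by
                rw [invOf_mul_self, Matrix.one_mulVec]
            _ = (⅟B) *ᵥ (B *ᵥ (Dm *ᵥ (A *ᵥ fun l => PowerSeries.C (v l)))) :=
                (Matrix.mulVec_mulVec _ _ _).symm
            _ = (⅟B) *ᵥ (M *ᵥ fun l => PowerSeries.C (v l)) := by rw [← hMv]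
        rw [h2]
        exact stmt2_dvd_mulVec _ hv i
      obtain ⟨s, hs⟩ := hsplit v j
      have h2 := h1 j
      rw [hDm, Matrix.mulVec_diagonal, hs] at h2
      rw [PowerSeries.X_pow_dvd_iff] at h2
      have h3 := h2 (r j) hj
      have h4 : (X : PowerSeries k) ^ (r j) * (PowerSeries.C ((A₀ *ᵥ v) j) + X ^ p * s)
          = (PowerSeries.C ((A₀ *ᵥ v) j) + X ^ p * s) * X ^ (r j) := mul_comm _ _
      rw [h4] at h3
      have h5 : (PowerSeries.coeff (0 + r j))
          ((PowerSeries.C ((A₀ *ᵥ v) j) + X ^ p * s) * X ^ (r j)) = 0 := by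
        rw [zero_add]; exact h3
      rw [PowerSeries.coeff_mul_X_pow] at h5
      rw [map_add] at h5
      have h6 : (PowerSeries.coeff 0) ((X : PowerSeries k) ^ p * s) = 0 :=
        PowerSeries.X_pow_dvd_iff.mp (dvd_mul_right _ s) 0 hp.pos
      rw [h6, add_zero, PowerSeries.coeff_zero_C] at h5
      exact h5
    · intro hv i
      rw [hMv]
      refine stmt2_dvd_mulVec _ (fun j => ?_) i
      obtain ⟨s, hs⟩ := hsplit v j
      rw [hDm, Matrix.mulVec_diagonal, hs]
      rcases lt_or_ge (r j) m with hlt | hle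
      · rw [hv j hlt, map_zero, zero_add]
        exact ((pow_dvd_pow X hm).mul_right s).mul_left _
      · exact (pow_dvd_pow X hle).mul_right _
  -- upper bound via triangularity
  have hub : ∀ m : ℕ, Module.finrank k (stmt2V M m)
      ≤ (Finset.univ.filter (fun i => m ≤ t i)).card := by
    intro m
    set P : Finset (Fin d) := Finset.univ.filter (fun i => m ≤ t i) with hP
    set φ : (stmt2V M m) →ₗ[k] ({i // i ∈ P} → k) :=
      (LinearMap.funLeft k k (fun i : {i // i ∈ P} => (i : Fin d))).comp (stmt2V M m).subtype with hφ
    have hinj : Function.Injective φ := by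
      intro x y hxy
      ext1
      funext l
      by_contra hne
      set v : Fin d → k := x.1 - y.1 with hv
      have hvmem : v ∈ stmt2V M m := sub_mem x.2 y.2
      have hvne : v ≠ 0 := by
        intro h0
        exact hne (by have := congrFun h0 l; simpa [hv, sub_eq_zero] using this)
      set S : Finset (Fin d) := Finset.univ.filter (fun l => v l ≠ 0) with hS
      have hSne : S.Nonempty := by
        rcases Function.ne_iff.mp hvne with ⟨l', hl'⟩
        exact ⟨l', by simp [hS]; exact hl'⟩
      set i₀ := S.max' hSne with hi₀
      have hvi₀ : v i₀ ≠ 0 := by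
        have := S.max'_mem hSne
        simpa [hS] using this
      have htop : ∀ l', i₀ < l' → v l' = 0 := by
        intro l' hl'
        by_contra h
        exact absurd (S.le_max' l' (by simp [hS]; exact h)) (not_le.mpr hl')
      have hcomp : (M *ᵥ fun l' => PowerSeries.C (v l')) i₀
          = c i₀ * X ^ (t i₀) * PowerSeries.C (v i₀) := by
        simp only [Matrix.mulVec, dotProduct]
        rw [Finset.sum_eq_single i₀]
        · rw [hM_diag]
        · intro l' _ hne'
          rcases lt_or_gt_of_ne hne' with hlt | hgt
          · rw [hM_lower i₀ l' hlt, zero_mul]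
          · rw [htop l' hgt, map_zero, mul_zero]
        · intro h; exact absurd (Finset.mem_univ i₀) h
      have hdvd := hvmem i₀
      rw [hcomp] at hdvd
      have hti : m ≤ t i₀ := by
        by_contra hlt
        push_neg at hlt
        rw [PowerSeries.X_pow_dvd_iff] at hdvd
        have h3 := hdvd (t i₀) hlt
        have h4 : c i₀ * X ^ (t i₀) * PowerSeries.C (v i₀)
            = (c i₀ * PowerSeries.C (v i₀)) * X ^ (t i₀) := by ring
        rw [h4] at h3
        have h5 : (PowerSeries.coeff (0 + t i₀))
            ((c i₀ * PowerSeries.C (v i₀)) * X ^ (t i₀)) = 0 := by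
          rw [zero_add]; exact h3
        rw [PowerSeries.coeff_mul_X_pow] at h5
        simp only [PowerSeries.coeff_zero_eq_constantCoeff, _root_.map_mul,
          PowerSeries.constantCoeff_C] at h5
        have hcu : constantCoeff (R := k) (c i₀) ≠ 0 := ((hc i₀).map (constantCoeff (R := k))).ne_zero
        exact (mul_ne_zero hcu hvi₀) h5
      have hmemP : i₀ ∈ P := by simp [hP, hti]
      have : v i₀ = 0 := by
        have h6 := congrFun hxy (⟨i₀, hmemP⟩ : {i // i ∈ P})
        simp only [hφ, LinearMap.comp_apply, LinearMap.funLeft_apply,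
          Submodule.subtype_apply] at h6
        simp [hv, sub_eq_zero]
        exact h6
      exact hvi₀ this
    have h7 := LinearMap.finrank_le_finrank_of_injective hinj
    rwa [Module.finrank_fintype_fun_eq_card, Fintype.card_coe] at h7
  -- lower bound via the characterization
  have hlb : ∀ m : ℕ, m ≤ p →
      (Finset.univ.filter (fun j => m ≤ r j)).card ≤ Module.finrank k (stmt2V M m) := by
    intro m hm
    set Q : Finset (Fin d) := Finset.univ.filter (fun j => m ≤ r j) with hQ
    set e : ({i // i ∈ Q} → k) →ₗ[k] (Fin d → k) :=
      Function.ExtendByZero.linearMap k (fun i : {i // i ∈ Q} => (i : Fin d)) with he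
    set ψ₀ : ({i // i ∈ Q} → k) →ₗ[k] (Fin d → k) :=
      ((⅟A₀).mulVecLin).comp e with hψ₀
    have hA₀ψ : ∀ g, A₀ *ᵥ (ψ₀ g) = e g := by
      intro g
      simp only [hψ₀, LinearMap.comp_apply, Matrix.mulVecLin_apply]
      rw [Matrix.mulVec_mulVec, mul_invOf_self, Matrix.one_mulVec]
    have hmem : ∀ g, ψ₀ g ∈ stmt2V M m := by
      intro g
      rw [hchar m hm]
      intro j hj
      rw [hA₀ψ]
      have hnot : ¬∃ a : {i // i ∈ Q}, (a : Fin d) = j := by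
        rintro ⟨⟨i, hi⟩, ha⟩
        simp only [hQ, Finset.mem_filter] at hi
        rw [← ha] at hj
        have h9 : r i < m := by simpa using hj
        omega
      simp only [he, Function.ExtendByZero.linearMap_apply]
      rw [Function.extend_apply' _ _ _ hnot]
      rfl
    set ψ : ({i // i ∈ Q} → k) →ₗ[k] (stmt2V M m) :=
      LinearMap.codRestrict _ ψ₀ hmem with hψ
    have hinj : Function.Injective ψ := by
      intro g₁ g₂ hg
      have h0 : ψ₀ g₁ = ψ₀ g₂ := congrArg Subtype.val hg
      have h1 : e g₁ = e g₂ := by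
        rw [← hA₀ψ, ← hA₀ψ, h0]
      funext a
      have h2 := congrFun h1 (a : Fin d)
      simp only [he, Function.ExtendByZero.linearMap_apply] at h2
      rwa [Subtype.coe_injective.extend_apply, Subtype.coe_injective.extend_apply] at h2
    have h7 := LinearMap.finrank_le_finrank_of_injective hinj
    rwa [Module.finrank_fintype_fun_eq_card, Fintype.card_coe] at h7
  -- determinant comparison
  have hdet : ∑ i, t i = ∑ i, r i := by
    have h1 : M.det = (∏ i, c i) * X ^ (∑ i, t i) := by
      rw [Matrix.det_of_upperTriangular (fun i j hij => hM_lower i j hij)]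
      calc ∏ i, M i i = ∏ i, (c i * X ^ t i) :=
            Finset.prod_congr rfl fun i _ => hM_diag i
        _ = (∏ i, c i) * ∏ i, (X : PowerSeries k) ^ t i := Finset.prod_mul_distrib
        _ = (∏ i, c i) * X ^ (∑ i, t i) := by rw [Finset.prod_pow_eq_pow_sum]
    have h2 : M.det = (B.det * A.det) * X ^ (∑ i, r i) := by
      rw [hfact, Matrix.det_mul, Matrix.det_mul, hDm, Matrix.det_diagonal,
        Finset.prod_pow_eq_pow_sum]
      ring
    have heq : (∏ i, c i) * X ^ (∑ i, t i) = (B.det * A.det) * X ^ (∑ i, r i) := by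
      rw [← h1, ← h2]
    have hU : constantCoeff (R := k) (∏ i, c i) ≠ 0 := by
      rw [map_prod]
      exact Finset.prod_ne_zero_iff.mpr fun i _ => ((hc i).map (constantCoeff (R := k))).ne_zero
    have hW : constantCoeff (R := k) (B.det * A.det) ≠ 0 := ((hB.mul hA).map (constantCoeff (R := k))).ne_zero
    exact stmt2_X_pow_cancel hU hW heq
  -- counting
  have key : ∀ m, m ≤ p →
      (Finset.univ.filter (fun j => m ≤ r j)).card
        ≤ (Finset.univ.filter (fun i => m ≤ t i)).card :=
    fun m hm => le_trans (hlb m hm) (hub m)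
  have hsumr : ∑ j, min p (r j) = ∑ j, r j :=
    Finset.sum_congr rfl fun j _ => min_eq_right (hr_le j)
  have hchain : ∑ j, r j ≤ ∑ i, min p (t i) := by
    calc ∑ j, r j = ∑ m ∈ Finset.Icc 1 p, (Finset.univ.filter (fun j => m ≤ r j)).card := by
          rw [stmt2_count_sum r, hsumr]
      _ ≤ ∑ m ∈ Finset.Icc 1 p, (Finset.univ.filter (fun i => m ≤ t i)).card :=
          Finset.sum_le_sum fun m hm => key m (Finset.mem_Icc.mp hm).2
      _ = ∑ i, min p (t i) := stmt2_count_sum t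
  have hminle : ∑ i, min p (t i) ≤ ∑ i, t i :=
    Finset.sum_le_sum fun i _ => min_le_right _ _
  have hEq1 : ∑ i, min p (t i) = ∑ i, t i :=
    le_antisymm hminle (hdet ▸ hchain)
  have htp : ∀ i, t i ≤ p := by
    intro i
    have h3 := (Finset.sum_eq_sum_iff_of_le (fun i _ => min_le_right p (t i))).mp hEq1 i
      (Finset.mem_univ i)
    omega
  have hFG : ∀ m ∈ Finset.Icc 1 p,
      (Finset.univ.filter (fun j => m ≤ r j)).card
        = (Finset.univ.filter (fun i => m ≤ t i)).card := by
    have hs : ∑ m ∈ Finset.Icc 1 p, (Finset.univ.filter (fun j => m ≤ r j)).card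
        = ∑ m ∈ Finset.Icc 1 p, (Finset.univ.filter (fun i => m ≤ t i)).card := by
      rw [stmt2_count_sum r, stmt2_count_sum t, hsumr, hEq1, hdet]
    exact fun m hm =>
      (Finset.sum_eq_sum_iff_of_le (fun m hm => key m (Finset.mem_Icc.mp hm).2)).mp hs m hm
  have hFGall : ∀ m : ℕ,
      (Finset.univ.filter (fun j => m ≤ r j)).card
        = (Finset.univ.filter (fun i => m ≤ t i)).card := by
    intro m
    rcases Nat.eq_zero_or_pos m with rfl | h1
    · simp
    rcases le_or_gt m p with h2 | h3
    · exact hFG m (Finset.mem_Icc.mpr ⟨h1, h2⟩)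
    · have e1 : (Finset.univ.filter (fun j => m ≤ r j)) = ∅ :=
        Finset.filter_eq_empty_iff.mpr fun j _ => by have := hr_le j; omega
      have e2 : (Finset.univ.filter (fun i => m ≤ t i)) = ∅ :=
        Finset.filter_eq_empty_iff.mpr fun i _ => by have := htp i; omega
      rw [e1, e2]
  -- conclude multiset equality
  ext a
  rw [Multiset.count_map, Multiset.count_map]
  have hmv : ∀ (f : Fin d → ℕ),
      Multiset.filter (fun i => a = f i) Finset.univ.val
        = (Finset.univ.filter (fun i => a = f i)).val := fun f => rfl
  rw [hmv t, hmv r]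
  show (Finset.univ.filter (fun i => a = t i)).card
      = (Finset.univ.filter (fun i => a = r i)).card
  have hsplitcnt : ∀ (f : Fin d → ℕ),
      (Finset.univ.filter (fun i => a = f i)).card
        + (Finset.univ.filter (fun i => a + 1 ≤ f i)).card
        = (Finset.univ.filter (fun i => a ≤ f i)).card := by
    intro f
    rw [← Finset.card_union_of_disjoint ?hdis, ← Finset.filter_or]
    · apply congrArg
      apply Finset.filter_congr
      intro x _
      constructor
      · rintro (h | h) <;> omega
      · intro h
        rcases eq_or_lt_of_le h with h' | h'
        · exact Or.inl h'
        · exact Or.inr h'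
    case hdis =>
      rw [Finset.disjoint_left]
      intro x hx1 hx2
      simp only [Finset.mem_filter] at hx1 hx2
      omega
  have e1 := hsplitcnt t
  have e2 := hsplitcnt r
  have e3 := hFGall a
  have e4 := hFGall (a + 1)
  omega
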